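/- arXiv:1202.1785 — 2 statements merged into one kernel-verified Lean document; each statement's English description precedes it below -/
import Mathlib

section
/- Let k ∈ ℂ and z₀ ∈ ℂ. Suppose g, M₁₁, M₁₂, M₂₁, M₂₂ : ℂ → ℂ with g, M₂₁, M₂₂ real-differentiable at z₀, g(z₀) ≠ 0, and suppose that at z₀ the equations ∂M₂₂(z₀) = Q₂₁(z₀)·M₁₂(z₀) and ∂M₂₁(z₀) + i·k·M₂₁(z₀) = Q₂₁(z₀)·M₁₁(z₀) hold. Define M₋(z) = M₂₂(z) + e(z,k)·M₂₁(z) and M₊(z) = M₁₁(z) + e(z,−k)·M₁₂(z). Then ∂M₋(z₀) = Q₂₁(z₀)·e(z₀,k)·M₊(z₀). -/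
open Complex

/-- Wirtinger derivative ∂f(z) = (1/2)(Df(z)(1) - i·Df(z)(i)), with Df the real Fréchet derivative. -/
noncomputable def dz (f : ℂ → ℂ) (z : ℂ) : ℂ :=
  (1/2 : ℂ) * (fderiv ℝ f z 1 - Complex.I * fderiv ℝ f z Complex.I)

/-- Wirtinger derivative ∂̄f(z) = (1/2)(Df(z)(1) + i·Df(z)(i)). -/
noncomputable def dzbar (f : ℂ → ℂ) (z : ℂ) : ℂ :=
  (1/2 : ℂ) * (fderiv ℝ f z 1 + Complex.I * fderiv ℝ f z Complex.I)

/-- Matrix potential entry Q₁₂(z) = -∂g(z)/g(z). -/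
noncomputable def Q12 (g : ℂ → ℂ) (z : ℂ) : ℂ := - dz g z / g z

/-- Matrix potential entry Q₂₁(z) = -∂̄g(z)/g(z). -/
noncomputable def Q21 (g : ℂ → ℂ) (z : ℂ) : ℂ := - dzbar g z / g z

/-- The unimodular exponential e(z,k) = exp(i(zk + z̄k̄)). -/
noncomputable def efun (z k : ℂ) : ℂ :=
  Complex.exp (Complex.I * (z * k + (starRingEnd ℂ) z * (starRingEnd ℂ) k))


noncomputable def phiL (k : ℂ) : ℂ →L[ℝ] ℂ :=
  (Complex.I * k) • ContinuousLinearMap.id ℝ ℂ +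
    (Complex.I * (starRingEnd ℂ) k) • (Complex.conjCLE.toContinuousLinearMap : ℂ →L[ℝ] ℂ)

lemma phiL_apply (k v : ℂ) : phiL k v = Complex.I * (v * k + (starRingEnd ℂ) v * (starRingEnd ℂ) k) := by
  simp [phiL, Complex.conjCLE]
  ring

lemma hasFDerivAt_efun (k z₀ : ℂ) :
    HasFDerivAt (fun z => efun z k) (efun z₀ k • phiL k) z₀ := by
  have hfun : (fun z => efun z k) = fun z => Complex.exp (phiL k z) := by
    funext z; rw [efun, phiL_apply]
  have hE : efun z₀ k = Complex.exp (phiL k z₀) := by rw [efun, phiL_apply]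
  rw [hfun, hE]
  exact ((phiL k).hasFDerivAt (x := z₀)).cexp

lemma dz_efun (k z₀ : ℂ) : dz (fun z => efun z k) z₀ = Complex.I * k * efun z₀ k := by
  rw [dz, (hasFDerivAt_efun k z₀).fderiv]
  have hI3 : Complex.I ^ 3 = -Complex.I := by
    rw [pow_succ, Complex.I_sq]; ring
  simp [phiL_apply]
  ring_nf
  rw [hI3]
  ring

lemma dz_add (f g : ℂ → ℂ) (z : ℂ) (hf : DifferentiableAt ℝ f z) (hg : DifferentiableAt ℝ g z) :
    dz (fun w => f w + g w) z = dz f z + dz g z := by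
  simp only [dz, fderiv_fun_add hf hg, ContinuousLinearMap.add_apply]
  ring

lemma dz_mul (f g : ℂ → ℂ) (z : ℂ) (hf : DifferentiableAt ℝ f z) (hg : DifferentiableAt ℝ g z) :
    dz (fun w => f w * g w) z = dz f z * g z + f z * dz g z := by
  simp only [dz, fderiv_fun_mul hf hg, ContinuousLinearMap.add_apply, ContinuousLinearMap.smul_apply,
    smul_eq_mul]
  ring

lemma efun_mul_neg (z k : ℂ) : efun z k * efun z (-k) = 1 := by
  rw [efun, efun, ← Complex.exp_add, ← Complex.exp_zero]
  congr 1
  simp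
  ring

theorem stmt9 (k z₀ : ℂ) (g M₁₁ M₁₂ M₂₁ M₂₂ : ℂ → ℂ)
    (hg : DifferentiableAt ℝ g z₀)
    (hM21 : DifferentiableAt ℝ M₂₁ z₀)
    (hM22 : DifferentiableAt ℝ M₂₂ z₀)
    (hg0 : g z₀ ≠ 0)
    (h1 : dz M₂₂ z₀ = Q21 g z₀ * M₁₂ z₀)
    (h2 : dz M₂₁ z₀ + Complex.I * k * M₂₁ z₀ = Q21 g z₀ * M₁₁ z₀) :
    dz (fun z => M₂₂ z + efun z k * M₂₁ z) z₀ =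
      Q21 g z₀ * efun z₀ k * (M₁₁ z₀ + efun z₀ (-k) * M₁₂ z₀) := by
  have he : DifferentiableAt ℝ (fun z => efun z k) z₀ := (hasFDerivAt_efun k z₀).differentiableAt
  rw [dz_add _ _ _ hM22 (he.fun_mul hM21), dz_mul _ _ _ he hM21, dz_efun, h1]
  have hEE := efun_mul_neg z₀ k
  linear_combination efun z₀ k * h2 - (Q21 g z₀ * M₁₂ z₀) * hEE
end

section
/- Let k ∈ ℂ and z₀ ∈ ℂ. Suppose g, M₁₁, M₁₂, M₂₁, M₂₂ : ℂ → ℂ with g, M₁₁, M₁₂ real-differentiable at z₀, g(z₀) ≠ 0, and suppose that at z₀ the equations ∂̄M₁₁(z₀) = Q₁₂(z₀)·M₂₁(z₀) and ∂̄M₁₂(z₀) − i·k·M₁₂(z₀) = Q₁₂(z₀)·M₂₂(z₀) hold. Define M₊(z) = M₁₁(z) + e(z,−k)·M₁₂(z) and M₋(z) = M₂₂(z) + e(z,k)·M₂₁(z). Then ∂̄M₊(z₀) = Q₁₂(z₀)·e(z₀,−k)·M₋(z₀) + i·(k − k̄)·e(z₀,−k)·M₁₂(z₀), where k̄ is the complex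 conjugate of k. -/
open Complex

lemma dzbar_add (f g : ℂ → ℂ) (z : ℂ) (hf : DifferentiableAt ℝ f z)
    (hg : DifferentiableAt ℝ g z) :
    dzbar (fun w => f w + g w) z = dzbar f z + dzbar g z := by
  simp only [dzbar, fderiv_fun_add hf hg, ContinuousLinearMap.add_apply]
  ring

lemma dzbar_mul (f g : ℂ → ℂ) (z : ℂ) (hf : DifferentiableAt ℝ f z)
    (hg : DifferentiableAt ℝ g z) :
    dzbar (fun w => f w * g w) z = dzbar f z * g z + f z * dzbar g z := by
  simp only [dzbar, fderiv_fun_mul hf hg, ContinuousLinearMap.add_apply,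
    ContinuousLinearMap.smul_apply, smul_eq_mul]
  ring

lemma efun_aux (a z : ℂ) :
    DifferentiableAt ℝ (fun w => efun w a) z ∧
      dzbar (fun w => efun w a) z = Complex.I * (starRingEnd ℂ) a * efun z a := by
  have hφ := ((((hasFDerivAt_id z).mul_const a).add
      ((Complex.conjCLE.hasFDerivAt).mul_const ((starRingEnd ℂ) a)))).const_mul Complex.I
  have hexp := ((Complex.hasDerivAt_exp
      (Complex.I * (z * a + (starRingEnd ℂ) z * (starRingEnd ℂ) a))).hasFDerivAt).restrictScalars ℝ
  have hd := hexp.comp z hφ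
  have hd' : HasFDerivAt (fun w => efun w a) _ z := hd
  refine ⟨hd'.differentiableAt, ?_⟩
  rw [dzbar, hd'.fderiv]
  simp [efun, Complex.ext_iff, Complex.exp_re, Complex.exp_im]
  constructor <;> ring

theorem stmt10 (k z₀ : ℂ) (g M₁₁ M₁₂ M₂₁ M₂₂ : ℂ → ℂ)
    (hg : DifferentiableAt ℝ g z₀)
    (hM11 : DifferentiableAt ℝ M₁₁ z₀)
    (hM12 : DifferentiableAt ℝ M₁₂ z₀)
    (hg0 : g z₀ ≠ 0)
    (h1 : dzbar M₁₁ z₀ = Q12 g z₀ * M₂₁ z₀)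
    (h2 : dzbar M₁₂ z₀ - Complex.I * k * M₁₂ z₀ = Q12 g z₀ * M₂₂ z₀) :
    dzbar (fun z => M₁₁ z + efun z (-k) * M₁₂ z) z₀ =
      Q12 g z₀ * efun z₀ (-k) * (M₂₂ z₀ + efun z₀ k * M₂₁ z₀) +
        Complex.I * (k - (starRingEnd ℂ) k) * efun z₀ (-k) * M₁₂ z₀ := by
  obtain ⟨hediff, hedz⟩ := efun_aux (-k) z₀
  simp only [map_neg] at hedz
  have hunit : efun z₀ (-k) * efun z₀ k = 1 := by
    rw [efun, efun, ← Complex.exp_add, ← Complex.exp_zero]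
    congr 1
    simp only [map_neg]
    ring
  have hsum : dzbar (fun z => M₁₁ z + efun z (-k) * M₁₂ z) z₀ =
      dzbar M₁₁ z₀ + dzbar (fun z => efun z (-k) * M₁₂ z) z₀ :=
    dzbar_add _ _ _ hM11 (hediff.mul hM12)
  have hprod : dzbar (fun z => efun z (-k) * M₁₂ z) z₀ =
      dzbar (fun w => efun w (-k)) z₀ * M₁₂ z₀ + efun z₀ (-k) * dzbar M₁₂ z₀ :=
    dzbar_mul _ _ _ hediff hM12
  have h2' : dzbar M₁₂ z₀ = Q12 g z₀ * M₂₂ z₀ + Complex.I * k * M₁₂ z₀ := by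
    linear_combination h2
  rw [hsum, hprod, h1, hedz, h2']
  linear_combination -(Q12 g z₀ * M₂₁ z₀) * hunit
end
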